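/- With x, v, b ∈ ZMod q such that x + v ≠ 0, the blinded Boneh–Boyen signature σ̃ := g₁^{b·(x+v)⁻¹} satisfies e(σ̃, g₂^x) = e(g₁, g₂)^b · e(σ̃, g₂)^{−v}; i.e., the second equation of the predicate p_BB holds for a correctly blinded signature on v. -/
import Mathlib

section aux

variable {G₁ G₂ GT : Type*} [CommGroup G₁] [CommGroup G₂] [CommGroup GT]

lemma bb_pow_left (e : G₁ → G₂ → GT)
    (he_left : ∀ (a a' : G₁) (b : G₂), e (a * a') b = e a b * e a' b)
    (a : G₁) (b : G₂) (n : ℕ) : e (a ^ n) b = e a b ^ n := by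
  have h1 : e (1 : G₁) b = 1 := by
    have := he_left 1 1 b
    simpa using this.symm
  induction n with
  | zero => simpa using h1
  | succ n ih => rw [pow_succ, he_left, ih, pow_succ]

lemma bb_pow_right (e : G₁ → G₂ → GT)
    (he_right : ∀ (a : G₁) (b b' : G₂), e a (b * b') = e a b * e a b')
    (a : G₁) (b : G₂) (n : ℕ) : e a (b ^ n) = e a b ^ n := by
  have h1 : e a (1 : G₂) = 1 := by
    have := he_right a 1 1
    simpa using this.symm
  induction n with
  | zero => simpa using h1
  | succ n ih => rw [pow_succ, he_right, ih, pow_succ]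

lemma bb_pow_mod {q : ℕ} [NeZero q] (t : GT) (ht : t ^ q = 1) (m : ℕ) :
    t ^ m = t ^ (m % q) := by
  conv_lhs => rw [← Nat.div_add_mod m q]
  rw [pow_add, pow_mul, ht, one_pow, one_mul]

lemma bb_pow_val_mul {q : ℕ} [NeZero q] (t : GT) (ht : t ^ q = 1) (u w : ZMod q) :
    t ^ (u * w).val = t ^ (u.val * w.val) := by
  rw [bb_pow_mod t ht (u.val * w.val), ZMod.val_mul]

lemma bb_pow_val_add {q : ℕ} [NeZero q] (t : GT) (ht : t ^ q = 1) (u w : ZMod q) :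
    t ^ (u + w).val = t ^ (u.val + w.val) := by
  rw [bb_pow_mod t ht (u.val + w.val), ZMod.val_add]

end aux

/-- A correctly blinded Boneh–Boyen signature `σ̃ = g₁^{b·(x+v)⁻¹}` satisfies
the second equation of the predicate `p_BB`:
`e(σ̃, g₂^x) = e(g₁, g₂)^b · e(σ̃, g₂)^{-v}`. -/
theorem blinded_boneh_boyen_verification
    {q : ℕ} (hq : q.Prime)
    {G₁ G₂ GT : Type*} [CommGroup G₁] [CommGroup G₂] [CommGroup GT]
    (hG₁ : ∀ x : G₁, x ^ q = 1) (hG₂ : ∀ x : G₂, x ^ q = 1)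
    (hGT : ∀ x : GT, x ^ q = 1)
    (g₁ h₁ f₁ : G₁) (g₂ f₂ : G₂)
    (e : G₁ → G₂ → GT)
    (he_left : ∀ (a a' : G₁) (b : G₂), e (a * a') b = e a b * e a' b)
    (he_right : ∀ (a : G₁) (b b' : G₂), e a (b * b') = e a b * e a b')
    (x v b : ZMod q) (hxv : x + v ≠ 0) :
    e (g₁ ^ (b * (x + v)⁻¹).val) (g₂ ^ x.val) =
      (e g₁ g₂) ^ b.val * (e (g₁ ^ (b * (x + v)⁻¹).val) g₂) ^ (-v).val := by
  haveI : Fact q.Prime := ⟨hq⟩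
  haveI : NeZero q := ⟨hq.ne_zero⟩
  set t := e g₁ g₂ with ht
  have htq : t ^ q = 1 := hGT t
  have key : (b * (x + v)⁻¹) * x = b + (b * (x + v)⁻¹) * (-v) := by
    field_simp
    ring
  calc e (g₁ ^ (b * (x + v)⁻¹).val) (g₂ ^ x.val)
      = t ^ ((b * (x + v)⁻¹).val * x.val) := by
        rw [bb_pow_left e he_left, bb_pow_right e he_right, ← pow_mul, Nat.mul_comm]
    _ = t ^ ((b * (x + v)⁻¹) * x).val := (bb_pow_val_mul t htq _ _).symm
    _ = t ^ (b + (b * (x + v)⁻¹) * (-v)).val := by rw [key]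
    _ = t ^ (b.val + ((b * (x + v)⁻¹) * (-v)).val) := bb_pow_val_add t htq _ _
    _ = t ^ b.val * t ^ ((b * (x + v)⁻¹) * (-v)).val := pow_add t _ _
    _ = t ^ b.val * t ^ ((b * (x + v)⁻¹).val * (-v).val) := by
        rw [bb_pow_val_mul t htq]
    _ = (e g₁ g₂) ^ b.val * (e (g₁ ^ (b * (x + v)⁻¹).val) g₂) ^ (-v).val := by
        rw [bb_pow_left e he_left, ← pow_mul, ht]
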